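/- Let φ : ℝ → ℝ be continuously differentiable on [−1,1], and let h : ℝ → ℝ be continuously differentiable on [−1,1] with h(0) = 0, h'(0) ≠ 0, and h(r) ≠ 0 for all r ∈ [−1,1] with r ≠ 0. Then the limit as ε → 0⁺ of ∫_{{r ∈ [−1,1] : |h(r)| ≥ ε}} φ(r)/r dr exists and equals the limit as ε → 0⁺ of ∫_{{r ∈ [−1,1] : |r| ≥ ε}} φ(r)/r dr. (The regularized integral does not depend on the choice of the cutoff function h vanishing linearly at 0.) -/

import Mathlib

open Set MeasureTheory Filter

open scoped ENNReal


noncomputable def gfun (φ : ℝ → ℝ) (r : ℝ) : ℝ := (φ r - φ 0) / r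

lemma g_bound {φ : ℝ → ℝ} (hφ : ContDiffOn ℝ 1 φ (Icc (-1) 1)) :
    ∃ C : ℝ, 0 ≤ C ∧ ∀ r ∈ Icc (-1 : ℝ) 1, |gfun φ r| ≤ C := by
  have hu : UniqueDiffOn ℝ (Icc (-1 : ℝ) 1) := uniqueDiffOn_Icc (by norm_num)
  have hc : ContinuousOn (derivWithin φ (Icc (-1) 1)) (Icc (-1) 1) :=
    hφ.continuousOn_derivWithin hu le_rfl
  obtain ⟨C, hC⟩ := (isCompact_Icc).exists_bound_of_continuousOn hc
  have hC0 : 0 ≤ C := le_trans (norm_nonneg _) (hC 0 (by norm_num))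
  refine ⟨C, hC0, fun r hr => ?_⟩
  have hdiff : DifferentiableOn ℝ φ (Icc (-1) 1) := hφ.differentiableOn one_ne_zero
  have h0 : (0 : ℝ) ∈ Icc (-1 : ℝ) 1 := by norm_num
  have hmv : ‖φ r - φ 0‖ ≤ C * ‖r - 0‖ :=
    Convex.norm_image_sub_le_of_norm_derivWithin_le hdiff hC (convex_Icc _ _) h0 hr
  rcases eq_or_ne r 0 with rfl | hr0
  · simp [gfun, hC0]
  · rw [gfun, abs_div]
    rw [div_le_iff₀ (abs_pos.2 hr0)]
    simpa [Real.norm_eq_abs] using hmv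

lemma g_integrableOn {φ : ℝ → ℝ} (hφ : ContDiffOn ℝ 1 φ (Icc (-1) 1)) :
    IntegrableOn (gfun φ) (Icc (-1) 1) := by
  obtain ⟨C, hC0, hC⟩ := g_bound hφ
  have hmeas : AEStronglyMeasurable (gfun φ) (volume.restrict (Icc (-1 : ℝ) 1)) := by
    have h1 : AEStronglyMeasurable φ (volume.restrict (Icc (-1 : ℝ) 1)) :=
      (hφ.continuousOn).aestronglyMeasurable measurableSet_Icc
    exact ((h1.sub aestronglyMeasurable_const).mul
      (measurable_inv.aestronglyMeasurable)).congr (by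
        filter_upwards with r using (div_eq_mul_inv _ _).symm)
  refine ⟨hmeas, ?_⟩
  refine HasFiniteIntegral.mono' (g := fun _ => C)
    (integrableOn_const (C := C) (s := Icc (-1 : ℝ) 1) (μ := volume) (by simp) (by simp)).2 ?_
  refine (ae_restrict_iff' measurableSet_Icc).2 (Eventually.of_forall fun r hr => ?_)
  simpa [Real.norm_eq_abs] using hC r hr


lemma S_closed {h : ℝ → ℝ} (hh : ContDiffOn ℝ 1 h (Icc (-1) 1)) (ε : ℝ) :
    IsClosed {r : ℝ | r ∈ Icc (-1 : ℝ) 1 ∧ ε ≤ |h r|} := by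
  have : {r : ℝ | r ∈ Icc (-1 : ℝ) 1 ∧ ε ≤ |h r|}
      = Icc (-1 : ℝ) 1 ∩ (fun r => |h r|) ⁻¹' (Ici ε) := by
    ext r; simp [and_comm]
  rw [this]
  exact ContinuousOn.preimage_isClosed_of_isClosed (hh.continuousOn.abs)
    isClosed_Icc isClosed_Ici

lemma vol_T_tendsto {h : ℝ → ℝ} (hh : ContDiffOn ℝ 1 h (Icc (-1) 1))
    (hh0 : h 0 = 0) (hhne : ∀ r ∈ Icc (-1 : ℝ) 1, r ≠ 0 → h r ≠ 0) :
    Tendsto (fun ε : ℝ => volume {r : ℝ | r ∈ Icc (-1 : ℝ) 1 ∧ |h r| < ε})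
      (nhdsWithin 0 (Ioi 0)) (nhds 0) := by
  set T : ℝ → Set ℝ := fun ε => {r : ℝ | r ∈ Icc (-1 : ℝ) 1 ∧ |h r| < ε} with hT
  have hTmeas : ∀ ε : ℝ, MeasurableSet (T ε) := by
    intro ε
    have : T ε = Icc (-1 : ℝ) 1 \ {r : ℝ | r ∈ Icc (-1 : ℝ) 1 ∧ ε ≤ |h r|} := by
      ext r
      simp only [hT, mem_setOf_eq, mem_diff, not_and, not_le]
      constructor
      · rintro ⟨h1, h2⟩; exact ⟨h1, fun _ => h2⟩
      · rintro ⟨h1, h2⟩; exact ⟨h1, h2 h1⟩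
    rw [this]
    exact measurableSet_Icc.diff (S_closed hh ε).measurableSet
  have hmono : ∀ {ε₁ ε₂ : ℝ}, ε₁ ≤ ε₂ → T ε₁ ⊆ T ε₂ := by
    intro ε₁ ε₂ hle r hr
    exact ⟨hr.1, lt_of_lt_of_le hr.2 hle⟩
  -- the sequence version
  have hseq : Tendsto (fun n : ℕ => volume (T (1 / (n + 1)))) atTop (nhds 0) := by
    have hanti : Antitone (fun n : ℕ => T (1 / (n + 1 : ℝ))) := by
      intro m n hmn
      refine hmono (one_div_le_one_div_of_le (by positivity) ?_)
      have : (m : ℝ) ≤ n := by exact_mod_cast hmn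
      linarith
    have hInt : (⋂ n : ℕ, T (1 / (n + 1 : ℝ))) = {(0 : ℝ)} := by
      ext r
      simp only [mem_iInter, mem_singleton_iff, hT, mem_setOf_eq]
      constructor
      · intro hr
        by_contra hr0
        have hrIcc := (hr 0).1
        have hne := hhne r hrIcc hr0
        obtain ⟨n, hn⟩ := exists_nat_one_div_lt (abs_pos.2 hne)
        exact absurd ((hr n).2) (not_lt.2 (le_of_lt hn))
      · rintro rfl
        intro n
        refine ⟨by norm_num, ?_⟩
        rw [hh0]; simp only [abs_zero]; positivity
    have := tendsto_measure_iInter_atTop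
      (μ := volume) (s := fun n : ℕ => T (1 / (n + 1 : ℝ)))
      (fun n => (hTmeas _).nullMeasurableSet) hanti
      ⟨0, by
        refine ne_of_lt (lt_of_le_of_lt (measure_mono (fun r hr => hr.1)) ?_)
        rw [Real.volume_Icc]; exact ENNReal.ofReal_lt_top⟩
    rw [hInt] at this
    simpa [Function.comp_def] using this
  rw [ENNReal.tendsto_nhds_zero]
  intro η hη
  rcases (ENNReal.tendsto_nhds_zero.1 hseq η hη).exists with ⟨n, hn⟩
  have hmem : Ioo (0 : ℝ) (1 / (n + 1)) ∈ nhdsWithin (0 : ℝ) (Ioi 0) := by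
    apply Ioo_mem_nhdsGT_of_mem
    constructor <;> [rfl; positivity]
  filter_upwards [hmem] with ε hε
  exact le_trans (measure_mono (hmono (le_of_lt hε.2))) hn

lemma tendsto_setIntegral_g {φ h : ℝ → ℝ}
    (hφ : ContDiffOn ℝ 1 φ (Icc (-1) 1))
    (hh : ContDiffOn ℝ 1 h (Icc (-1) 1))
    (hh0 : h 0 = 0) (hhne : ∀ r ∈ Icc (-1 : ℝ) 1, r ≠ 0 → h r ≠ 0) :
    Tendsto (fun ε : ℝ => ∫ r in {r : ℝ | r ∈ Icc (-1 : ℝ) 1 ∧ ε ≤ |h r|}, gfun φ r)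
      (nhdsWithin 0 (Ioi 0)) (nhds (∫ r in Icc (-1 : ℝ) 1, gfun φ r)) := by
  obtain ⟨C, hC0, hC⟩ := g_bound hφ
  have hint := g_integrableOn hφ
  set S : ℝ → Set ℝ := fun ε => {r : ℝ | r ∈ Icc (-1 : ℝ) 1 ∧ ε ≤ |h r|} with hS
  set T : ℝ → Set ℝ := fun ε => {r : ℝ | r ∈ Icc (-1 : ℝ) 1 ∧ |h r| < ε} with hT
  have hTsub : ∀ ε, T ε ⊆ Icc (-1 : ℝ) 1 := fun ε r hr => hr.1
  have hSsub : ∀ ε, S ε ⊆ Icc (-1 : ℝ) 1 := fun ε r hr => hr.1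
  have hTmeas : ∀ ε : ℝ, MeasurableSet (T ε) := by
    intro ε
    have : T ε = Icc (-1 : ℝ) 1 \ S ε := by
      ext r
      simp only [hT, hS, mem_setOf_eq, mem_diff, not_and, not_le]
      constructor
      · rintro ⟨h1, h2⟩; exact ⟨h1, fun _ => h2⟩
      · rintro ⟨h1, h2⟩; exact ⟨h1, h2 h1⟩
    rw [this]
    exact measurableSet_Icc.diff (S_closed hh ε).measurableSet
  have hTfin : ∀ ε, volume (T ε) ≠ ⊤ := fun ε =>
    ne_of_lt (lt_of_le_of_lt (measure_mono (hTsub ε))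
      (by rw [Real.volume_Icc]; exact ENNReal.ofReal_lt_top))
  -- decomposition of the integral
  have hdec : ∀ ε : ℝ, ∫ r in S ε, gfun φ r
      = (∫ r in Icc (-1 : ℝ) 1, gfun φ r) - ∫ r in T ε, gfun φ r := by
    intro ε
    have hunion : S ε ∪ T ε = Icc (-1 : ℝ) 1 := by
      ext r
      simp only [hS, hT, mem_union, mem_setOf_eq]
      constructor
      · rintro (h1 | h1) <;> exact h1.1
      · intro h1
        rcases le_or_gt ε (|h r|) with h2 | h2
        · exact Or.inl ⟨h1, h2⟩
        · exact Or.inr ⟨h1, h2⟩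
    have hdisj : Disjoint (S ε) (T ε) := by
      rw [disjoint_left]
      rintro r ⟨_, h1⟩ ⟨_, h2⟩
      exact absurd h1 (not_le.2 h2)
    have := setIntegral_union hdisj (hTmeas ε)
      (hint.mono_set (hSsub ε)) (hint.mono_set (hTsub ε)) (f := gfun φ) (μ := volume)
    rw [hunion] at this
    rw [this]; ring
  -- the T-integral tends to 0
  have hre : Tendsto (fun ε : ℝ => (volume (T ε)).toReal) (nhdsWithin 0 (Ioi 0)) (nhds 0) := by
    have := vol_T_tendsto hh hh0 hhne
    have h2 : Tendsto ENNReal.toReal (nhds (0 : ℝ≥0∞)) (nhds ((0 : ℝ≥0∞)).toReal) :=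
      (ENNReal.tendsto_toReal (by simp))
    simpa [Function.comp_def, hT] using h2.comp this
  have hbound : ∀ ε : ℝ, ‖∫ r in T ε, gfun φ r‖ ≤ C * (volume (T ε)).toReal := by
    intro ε
    refine norm_setIntegral_le_of_norm_le_const (C := C)
      (lt_of_le_of_ne le_top (hTfin ε)) (fun r hr => ?_)
    · simpa [Real.norm_eq_abs] using hC r (hTsub ε hr)
  have hTtend : Tendsto (fun ε : ℝ => ∫ r in T ε, gfun φ r) (nhdsWithin 0 (Ioi 0)) (nhds 0) :=
    squeeze_zero_norm hbound (by simpa using hre.const_mul C)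
  have := hTtend.const_sub (∫ r in Icc (-1 : ℝ) 1, gfun φ r)
  simp only [sub_zero] at this
  refine Tendsto.congr (fun ε => (hdec ε).symm) this

lemma key {φ h : ℝ → ℝ}
    (hφ : ContDiffOn ℝ 1 φ (Icc (-1) 1))
    (hh : ContDiffOn ℝ 1 h (Icc (-1) 1))
    (hh0 : h 0 = 0) (hpos : 0 < deriv h 0)
    (hhne : ∀ r ∈ Icc (-1 : ℝ) 1, r ≠ 0 → h r ≠ 0) :
    Tendsto (fun ε : ℝ => ∫ r in {r : ℝ | r ∈ Icc (-1 : ℝ) 1 ∧ ε ≤ |h r|}, φ r / r)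
      (nhdsWithin 0 (Ioi 0)) (nhds (∫ r in Icc (-1 : ℝ) 1, gfun φ r)) := by
  classical
  -- derivative at 0
  have hIccmem : Icc (-1 : ℝ) 1 ∈ nhds (0 : ℝ) := Icc_mem_nhds (by norm_num) (by norm_num)
  have hdiff0 : DifferentiableAt ℝ h 0 :=
    (hh.differentiableOn one_ne_zero).differentiableAt hIccmem
  have hder : HasDerivAt h (deriv h 0) 0 := hdiff0.hasDerivAt
  -- continuity of deriv near 0
  have hcd : ContinuousOn (deriv h) (Ioo (-1 : ℝ) 1) :=
    (hh.mono Ioo_subset_Icc_self).continuousOn_deriv_of_isOpen isOpen_Ioo le_rfl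
  have hcd0 : ContinuousAt (deriv h) 0 :=
    hcd.continuousAt (Ioo_mem_nhds (by norm_num) (by norm_num))
  have hev : ∀ᶠ x in nhds (0 : ℝ), 0 < deriv h x := hcd0.eventually (eventually_gt_nhds hpos)
  obtain ⟨δ', hδ'pos, hδ'⟩ := Metric.eventually_nhds_iff_ball.1 hev
  set δ : ℝ := min (δ' / 2) (1 / 2) with hδdef
  have hδpos : 0 < δ := lt_min (by linarith) (by norm_num)
  have hδlt1 : δ < 1 := lt_of_le_of_lt (min_le_right _ _) (by norm_num)
  have hδsub : Icc (-δ) δ ⊆ Icc (-1 : ℝ) 1 :=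
    Icc_subset_Icc (by linarith) (by linarith)
  have hδball : Icc (-δ) δ ⊆ Metric.ball (0 : ℝ) δ' := by
    intro x hx
    have h1 : δ ≤ δ' / 2 := min_le_left _ _
    obtain ⟨hx1, hx2⟩ := hx
    simp only [Metric.mem_ball, Real.dist_eq, sub_zero, abs_lt]
    constructor <;> linarith
  have hderpos : ∀ x ∈ Icc (-δ) δ, 0 < deriv h x := fun x hx => hδ' _ (hδball hx)
  have hmono : StrictMonoOn h (Icc (-δ) δ) :=
    strictMonoOn_of_deriv_pos (convex_Icc _ _) (hh.continuousOn.mono hδsub)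
      (fun x hx => hderpos x (by rw [interior_Icc] at hx; exact Ioo_subset_Icc_self hx))
  have h0mem : (0 : ℝ) ∈ Icc (-δ) δ := ⟨by linarith, by linarith⟩
  have hδmem : δ ∈ Icc (-δ) δ := ⟨by linarith, le_refl _⟩
  have hmδmem : -δ ∈ Icc (-δ) δ := ⟨le_refl _, by linarith⟩
  have hhδpos : 0 < h δ := by have := hmono h0mem hδmem hδpos; rwa [hh0] at this
  have hhmδneg : h (-δ) < 0 := by
    have := hmono hmδmem h0mem (by linarith); rwa [hh0] at this
  -- minimum of |h| outside (-δ, δ)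
  set K : Set ℝ := Icc (-1 : ℝ) 1 \ Ioo (-δ) δ with hK
  have hKcomp : IsCompact K := isCompact_Icc.diff isOpen_Ioo
  have hKne : K.Nonempty :=
    ⟨1, ⟨by norm_num, by rintro ⟨_, h2⟩; linarith⟩⟩
  obtain ⟨z, hzK, hzmin⟩ :=
    hKcomp.exists_isMinOn hKne ((hh.continuousOn.mono diff_subset).abs)
  have hzne : z ≠ 0 := by
    rintro rfl
    exact hzK.2 ⟨by linarith, hδpos⟩
  set m₂ : ℝ := |h z| with hm2
  have hm2pos : 0 < m₂ := abs_pos.2 (hhne z hzK.1 hzne)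
  set ε₀ : ℝ := min (min (h δ) (-h (-δ))) m₂ with hε₀
  have hε₀pos : 0 < ε₀ := lt_min (lt_min hhδpos (by linarith)) hm2pos
  -- the structural description of the cutoff set
  have main : ∀ ε ∈ Ioo (0 : ℝ) ε₀, ∃ a b : ℝ,
      a ∈ Ioo (-δ) 0 ∧ b ∈ Ioo 0 δ ∧ h a = -ε ∧ h b = ε ∧
      {r : ℝ | r ∈ Icc (-1 : ℝ) 1 ∧ ε ≤ |h r|} = Icc (-1) a ∪ Icc b 1 := by
    rintro ε ⟨hε1, hε2⟩
    have hεhδ : ε < h δ :=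
      lt_of_lt_of_le hε2 (le_trans (min_le_left _ _) (min_le_left _ _))
    have hεhmδ : h (-δ) < -ε := by
      have : ε < -h (-δ) :=
        lt_of_lt_of_le hε2 (le_trans (min_le_left _ _) (min_le_right _ _))
      linarith
    have hεm2 : ε < m₂ := lt_of_lt_of_le hε2 (min_le_right _ _)
    have hcont1 : ContinuousOn h (Icc (0 : ℝ) δ) :=
      hh.continuousOn.mono (Icc_subset_Icc (by norm_num) (by linarith))
    obtain ⟨b, hbIoo, hbval⟩ := intermediate_value_Ioo (le_of_lt hδpos) hcont1
      (show ε ∈ Ioo (h 0) (h δ) by rw [hh0]; exact ⟨hε1, hεhδ⟩)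
    have hcont2 : ContinuousOn h (Icc (-δ) (0 : ℝ)) :=
      hh.continuousOn.mono (Icc_subset_Icc (by linarith) (by norm_num))
    obtain ⟨a, haIoo, haval⟩ := intermediate_value_Ioo (by linarith : -δ ≤ (0:ℝ)) hcont2
      (show -ε ∈ Ioo (h (-δ)) (h 0) by rw [hh0]; exact ⟨hεhmδ, by linarith⟩)
    have hamem : a ∈ Icc (-δ) δ := ⟨le_of_lt haIoo.1, by linarith [haIoo.2]⟩
    have hbmem : b ∈ Icc (-δ) δ := ⟨by linarith [hbIoo.1], le_of_lt hbIoo.2⟩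
    refine ⟨a, b, haIoo, hbIoo, haval, hbval, ?_⟩
    ext r
    simp only [mem_setOf_eq, mem_union, mem_Icc]
    constructor
    · rintro ⟨⟨hr1, hr2⟩, hr3⟩
      rcases le_or_gt r a with hra | hra
      · exact Or.inl ⟨hr1, hra⟩
      rcases le_or_gt b r with hrb | hrb
      · exact Or.inr ⟨hrb, hr2⟩
      exfalso
      have hrmem : r ∈ Icc (-δ) δ := ⟨by linarith [haIoo.1], by linarith [hbIoo.2]⟩
      have h1 : h r < ε := by
        have := hmono hrmem hbmem hrb; rwa [hbval] at this
      have h2 : -ε < h r := by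
        have := hmono hamem hrmem hra; rwa [haval] at this
      exact absurd hr3 (not_le.2 (abs_lt.2 ⟨h2, h1⟩))
    · rintro (⟨hr1, hr2⟩ | ⟨hr1, hr2⟩)
      · refine ⟨⟨hr1, by linarith [haIoo.2]⟩, ?_⟩
        rcases lt_or_ge r (-δ) with hrδ | hrδ
        · have hrK : r ∈ K := ⟨⟨hr1, by linarith [haIoo.2]⟩,
            by rintro ⟨hc1, _⟩; linarith⟩
          have := isMinOn_iff.1 hzmin r hrK
          linarith
        · have hrmem : r ∈ Icc (-δ) δ :=
            ⟨hrδ, by linarith [haIoo.2]⟩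
          have hle : h r ≤ h a := hmono.monotoneOn hrmem hamem hr2
          rw [haval] at hle
          exact le_abs.2 (Or.inr (by linarith))
      · refine ⟨⟨by linarith [hbIoo.1], hr2⟩, ?_⟩
        rcases lt_or_ge δ r with hrδ | hrδ
        · have hrK : r ∈ K := ⟨⟨by linarith [hbIoo.1], hr2⟩,
            by rintro ⟨_, hc2⟩; linarith⟩
          have := isMinOn_iff.1 hzmin r hrK
          linarith
        · have hrmem : r ∈ Icc (-δ) δ :=
            ⟨by linarith [hbIoo.1], hrδ⟩
          have hle : h b ≤ h r := hmono.monotoneOn hbmem hrmem hr1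
          rw [hbval] at hle
          exact le_abs.2 (Or.inl hle)
  choose! A B hA hB hAval hBval hSet using main
  have hIooMem : ∀ {c : ℝ}, 0 < c → Ioo (0 : ℝ) c ∈ nhdsWithin (0 : ℝ) (Ioi 0) :=
    fun hc => Ioo_mem_nhdsGT_of_mem ⟨le_refl 0, hc⟩
  -- B tends to 0
  have htendB : Tendsto B (nhdsWithin 0 (Ioi 0)) (nhds 0) := by
    rw [Metric.tendsto_nhds]
    intro η hη
    set δ'' : ℝ := min δ (η / 2) with hδ''
    have hδ''pos : 0 < δ'' := lt_min hδpos (by linarith)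
    have hδ''mem : δ'' ∈ Icc (-δ) δ := ⟨by linarith [lt_min hδpos (show (0:ℝ) < η/2 by linarith)], min_le_left _ _⟩
    have hhδ''pos : 0 < h δ'' := by
      have := hmono h0mem hδ''mem hδ''pos; rwa [hh0] at this
    filter_upwards [hIooMem (lt_min hε₀pos hhδ''pos)] with ε hε
    have hεIoo : ε ∈ Ioo 0 ε₀ := ⟨hε.1, lt_of_lt_of_le hε.2 (min_le_left _ _)⟩
    have hBmem : B ε ∈ Icc (-δ) δ :=
      ⟨by linarith [(hB ε hεIoo).1], le_of_lt (hB ε hεIoo).2⟩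
    have h1 : h (B ε) < h δ'' := by
      rw [hBval ε hεIoo]; exact lt_of_lt_of_le hε.2 (min_le_right _ _)
    have h2 : B ε < δ'' := by
      by_contra hcon
      push_neg at hcon
      exact absurd (hmono.monotoneOn hδ''mem hBmem hcon) (not_le.2 h1)
    rw [Real.dist_eq, sub_zero, abs_of_pos (hB ε hεIoo).1]
    have : δ'' ≤ η / 2 := min_le_right _ _
    linarith
  -- A tends to 0
  have htendA : Tendsto A (nhdsWithin 0 (Ioi 0)) (nhds 0) := by
    rw [Metric.tendsto_nhds]
    intro η hη
    set δ'' : ℝ := min δ (η / 2) with hδ''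
    have hδ''pos : 0 < δ'' := lt_min hδpos (by linarith)
    have hδ''mem : -δ'' ∈ Icc (-δ) δ :=
      ⟨by simp only [neg_le_neg_iff]; exact min_le_left _ _, by linarith⟩
    have hhδ''neg : h (-δ'') < 0 := by
      have := hmono hδ''mem h0mem (by linarith); rwa [hh0] at this
    filter_upwards [hIooMem (lt_min hε₀pos (by linarith : (0:ℝ) < -h (-δ'')))] with ε hε
    have hεIoo : ε ∈ Ioo 0 ε₀ := ⟨hε.1, lt_of_lt_of_le hε.2 (min_le_left _ _)⟩
    have hAmem : A ε ∈ Icc (-δ) δ :=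
      ⟨le_of_lt (hA ε hεIoo).1, by linarith [(hA ε hεIoo).2]⟩
    have h1 : h (-δ'') < h (A ε) := by
      rw [hAval ε hεIoo]
      have : ε < -h (-δ'') := lt_of_lt_of_le hε.2 (min_le_right _ _)
      linarith
    have h2 : -δ'' < A ε := by
      by_contra hcon
      push_neg at hcon
      exact absurd (hmono.monotoneOn hAmem hδ''mem hcon) (not_le.2 h1)
    rw [Real.dist_eq, sub_zero, abs_of_neg (hA ε hεIoo).2]
    have : δ'' ≤ η / 2 := min_le_right _ _
    linarith
  -- slope limit
  have hslope : Tendsto (fun x : ℝ => h x / x) (nhdsWithin 0 {x : ℝ | x ≠ 0})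
      (nhds (deriv h 0)) := by
    have := hasDerivAt_iff_tendsto_slope.1 hder
    refine Tendsto.congr (fun x => ?_) this
    simp [slope_def_field, hh0]
  have htendB' : Tendsto B (nhdsWithin 0 (Ioi 0)) (nhdsWithin 0 {x : ℝ | x ≠ 0}) := by
    rw [tendsto_nhdsWithin_iff]
    exact ⟨htendB, by filter_upwards [hIooMem hε₀pos] with ε hε using ne_of_gt (hB ε hε).1⟩
  have htendA' : Tendsto A (nhdsWithin 0 (Ioi 0)) (nhdsWithin 0 {x : ℝ | x ≠ 0}) := by
    rw [tendsto_nhdsWithin_iff]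
    exact ⟨htendA, by filter_upwards [hIooMem hε₀pos] with ε hε using ne_of_lt (hA ε hε).2⟩
  have hBq : Tendsto (fun ε : ℝ => ε / B ε) (nhdsWithin 0 (Ioi 0)) (nhds (deriv h 0)) := by
    refine Tendsto.congr' ?_ (hslope.comp htendB')
    filter_upwards [hIooMem hε₀pos] with ε hε
    simp only [Function.comp_apply, hBval ε hε]
  have hAq : Tendsto (fun ε : ℝ => ε / (-A ε)) (nhdsWithin 0 (Ioi 0)) (nhds (deriv h 0)) := by
    refine Tendsto.congr' ?_ (hslope.comp htendA')
    filter_upwards [hIooMem hε₀pos] with ε hε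
    simp only [Function.comp_apply, hAval ε hε]
    rw [neg_div, div_neg]
  have hratio : Tendsto (fun ε : ℝ => (-A ε) / B ε) (nhdsWithin 0 (Ioi 0)) (nhds 1) := by
    have hdiv := hBq.div hAq (ne_of_gt hpos)
    rw [div_self (ne_of_gt hpos)] at hdiv
    refine Tendsto.congr' ?_ hdiv
    filter_upwards [hIooMem hε₀pos] with ε hε
    have hεne : ε ≠ 0 := ne_of_gt hε.1
    have hBne : B ε ≠ 0 := ne_of_gt (hB ε hε).1
    have hAne : -A ε ≠ 0 := ne_of_gt (neg_pos.2 (hA ε hε).2)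
    simp only [Pi.div_apply]
    field_simp
  have hlog : Tendsto (fun ε : ℝ => Real.log ((-A ε) / B ε)) (nhdsWithin 0 (Ioi 0))
      (nhds 0) := by
    have hc : ContinuousAt Real.log 1 := Real.continuousAt_log one_ne_zero
    have := hc.tendsto.comp hratio
    simpa [Function.comp_def] using this
  -- assembly
  have hg := tendsto_setIntegral_g hφ hh hh0 hhne
  have hsum := hg.add (hlog.const_mul (φ 0))
  rw [mul_zero, add_zero] at hsum
  refine Tendsto.congr' ?_ hsum
  filter_upwards [hIooMem hε₀pos] with ε hε
  obtain hSet' := hSet ε hε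
  have haIoo := hA ε hε
  have hbIoo := hB ε hε
  set a := A ε with ha
  set b := B ε with hb
  have hane : ∀ x ∈ Icc (-1 : ℝ) a, x ≠ 0 := fun x hx =>
    ne_of_lt (lt_of_le_of_lt hx.2 haIoo.2)
  have hbne : ∀ x ∈ Icc b (1 : ℝ), x ≠ 0 := fun x hx =>
    ne_of_gt (lt_of_lt_of_le hbIoo.1 hx.1)
  have hcont1 : ContinuousOn (fun r : ℝ => 1 / r) (Icc (-1) a) :=
    continuousOn_const.div continuousOn_id hane
  have hcont2 : ContinuousOn (fun r : ℝ => 1 / r) (Icc b 1) :=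
    continuousOn_const.div continuousOn_id hbne
  have hint1 : IntegrableOn (fun r : ℝ => 1 / r) (Icc (-1) a) := hcont1.integrableOn_Icc
  have hint2 : IntegrableOn (fun r : ℝ => 1 / r) (Icc b 1) := hcont2.integrableOn_Icc
  have hdisj : Disjoint (Icc (-1 : ℝ) a) (Icc b 1) := by
    rw [disjoint_left]
    rintro x ⟨_, hx2⟩ ⟨hx3, _⟩
    have := haIoo.2; have := hbIoo.1
    linarith
  have hintu : IntegrableOn (fun r : ℝ => 1 / r) (Icc (-1) a ∪ Icc b 1) := hint1.union hint2
  have hUsub : Icc (-1 : ℝ) a ∪ Icc b 1 ⊆ Icc (-1 : ℝ) 1 :=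
    union_subset (Icc_subset_Icc le_rfl (by linarith [haIoo.2]))
      (Icc_subset_Icc (by linarith [hbIoo.1]) le_rfl)
  have hgint : IntegrableOn (gfun φ) (Icc (-1 : ℝ) a ∪ Icc b 1) :=
    (g_integrableOn hφ).mono_set hUsub
  -- value of ∫ 1/r
  have hval1 : ∫ r in Icc (-1 : ℝ) a, (1 / r) = Real.log (-a) := by
    rw [MeasureTheory.integral_Icc_eq_integral_Ioc,
      ← intervalIntegral.integral_of_le (by linarith [haIoo.1] : (-1 : ℝ) ≤ a),
      integral_one_div]
    · have : a / (-1 : ℝ) = -a := by ring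
      rw [this]
    · rw [Set.uIcc_of_le (by linarith [haIoo.1] : (-1:ℝ) ≤ a)]
      simp only [Set.mem_Icc, not_and, not_le]
      intro _
      linarith [haIoo.2]
  have hval2 : ∫ r in Icc b (1 : ℝ), (1 / r) = Real.log (1 / b) := by
    rw [MeasureTheory.integral_Icc_eq_integral_Ioc,
      ← intervalIntegral.integral_of_le (by linarith [hbIoo.2] : b ≤ (1 : ℝ)),
      integral_one_div]
    · rw [Set.uIcc_of_le (by linarith [hbIoo.2] : b ≤ (1:ℝ))]
      simp only [Set.mem_Icc, not_and, not_le]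
      intro h1
      linarith [hbIoo.1]
  -- value of the union integral of 1/r
  have hUn : ∫ r in Icc (-1 : ℝ) a ∪ Icc b 1, (1 / r)
      = Real.log ((-a) / b) := by
    rw [setIntegral_union hdisj measurableSet_Icc hint1 hint2, hval1, hval2,
      Real.log_div (ne_of_gt (by linarith [haIoo.2] : (0:ℝ) < -a))
        (ne_of_gt hbIoo.1), one_div, Real.log_inv]
    ring
  -- the pointwise identity
  have hpt : ∀ r : ℝ, gfun φ r + φ 0 * (1 / r) = φ r / r := by
    intro r
    rw [gfun, mul_one_div, ← add_div]
    ring_nf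
  -- assemble the equality of integrals
  show (∫ r in {r : ℝ | r ∈ Icc (-1 : ℝ) 1 ∧ ε ≤ |h r|}, gfun φ r)
      + φ 0 * Real.log ((-a) / b)
      = ∫ r in {r : ℝ | r ∈ Icc (-1 : ℝ) 1 ∧ ε ≤ |h r|}, φ r / r
  rw [hSet', ← hUn]
  rw [← integral_const_mul, ← integral_add hgint (hintu.const_mul (φ 0))]
  exact setIntegral_congr_fun (measurableSet_Icc.union measurableSet_Icc)
    (fun r _ => hpt r)

/-- independence of the regularized volume on the cutoff function:
for `φ` continuously differentiable on `[-1, 1]` and `h` continuously differentiable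
on `[-1, 1]` with `h(0) = 0`, `h'(0) ≠ 0`, and `h` nonzero away from `0`, the limits
as `ε → 0⁺` of `∫_{ {|h(r)| ≥ ε} } φ(r)/r dr` and of `∫_{ {|r| ≥ ε} } φ(r)/r dr`
both exist and are equal. -/
theorem regularized_integral_independent_of_cutoff (φ h : ℝ → ℝ)
    (hφ : ContDiffOn ℝ 1 φ (Icc (-1) 1))
    (hh : ContDiffOn ℝ 1 h (Icc (-1) 1))
    (hh0 : h 0 = 0) (hh'0 : deriv h 0 ≠ 0)
    (hhne : ∀ r ∈ Icc (-1 : ℝ) 1, r ≠ 0 → h r ≠ 0) :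
    ∃ L : ℝ,
      Tendsto (fun ε : ℝ => ∫ r in {r : ℝ | r ∈ Icc (-1 : ℝ) 1 ∧ ε ≤ |h r|}, φ r / r)
        (nhdsWithin 0 (Ioi 0)) (nhds L) ∧
      Tendsto (fun ε : ℝ => ∫ r in {r : ℝ | r ∈ Icc (-1 : ℝ) 1 ∧ ε ≤ |r|}, φ r / r)
        (nhdsWithin 0 (Ioi 0)) (nhds L) := by
  refine ⟨∫ r in Icc (-1 : ℝ) 1, gfun φ r, ?_, ?_⟩
  · rcases hh'0.lt_or_gt with hneg | hpos
    · have hd : deriv (fun r => -h r) 0 = -deriv h 0 := deriv.fun_neg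
      have hkey := key hφ hh.neg (by simp [hh0])
        (by rw [hd]; exact neg_pos.2 hneg)
        (fun r hr hr0 => by simpa using hhne r hr hr0)
      refine Tendsto.congr (fun ε => ?_) hkey
      congr 1
      ext r
      simp [abs_neg]
    · exact key hφ hh hh0 hpos hhne
  · have hid : ContDiffOn ℝ 1 (fun x : ℝ => x) (Icc (-1) 1) := contDiff_id.contDiffOn
    have hkey := key hφ hid rfl (by simp) (fun r _ hr0 => hr0)
    simpa using hkey
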